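/- Let k be an algebraically closed field of characteristic zero and A ∈ k[[z]] of order n ≥ 2. Then A has the form A(z) = z^r·R(z^m) for some R ∈ k[[z]] and integers m ≥ 2, r ≥ 0, if and only if every Böttcher function β_A of A has the form β_A(z) = z·L(z^m) for some L ∈ k[[z]] with nonzero constant term. -/

import Mathlib

open PowerSeries

/-- Composition (substitution) `comp A B = A ∘ B` of formal power series,
the standard coefficient formula, well-behaved when `B` has zero constant term. -/
noncomputable def comp {k : Type*} [Field k] (A B : PowerSeries k) : PowerSeries k :=
  PowerSeries.mk fun n =>
    ∑ i ∈ Finset.range (n + 1), (PowerSeries.coeff i A) * (PowerSeries.coeff n (B ^ i))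

/-- `iterComp φ j` is the `j`-fold compositional iterate `φ^{∘j}` (with `φ^{∘0} = z`). -/
noncomputable def iterComp {k : Type*} [Field k] (φ : PowerSeries k) : ℕ → PowerSeries k
  | 0 => PowerSeries.X
  | n + 1 => comp φ (iterComp φ n)

/-- Composition of a list of power series: `compList [A₁, …, A_r] = A₁ ∘ ⋯ ∘ A_r`. -/
noncomputable def compList {k : Type*} [Field k] : List (PowerSeries k) → PowerSeries k
  | [] => PowerSeries.X
  | a :: t => comp a (compList t)

section Aux

variable {k : Type*} [Field k]

lemma coeff_pow_lt {F : PowerSeries k} {d : ℕ} (hF : ∀ l, l < d → coeff l F = 0)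
    (s : ℕ) : ∀ v, v < s * d → coeff v (F ^ s) = 0 := by
  induction s with
  | zero => intro v hv; omega
  | succ s ih =>
    intro v hv
    rw [pow_succ, coeff_mul]
    apply Finset.sum_eq_zero
    rintro ⟨u, w⟩ huw
    simp only [Finset.HasAntidiagonal.mem_antidiagonal] at huw
    rcases lt_or_ge u (s * d) with h | h
    · rw [ih u h, zero_mul]
    · have hd : (s+1) * d = s*d + d := by ring
      rw [hF w (by omega), mul_zero]

lemma coeff_pow_self {F : PowerSeries k} (hF : coeff 0 F = 0) (s : ℕ) :
    coeff s (F ^ s) = (coeff 1 F) ^ s := by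
  induction s with
  | zero => simp
  | succ s ih =>
    rw [pow_succ, coeff_mul]
    have h1 : ∀ l, l < 1 → coeff l F = 0 := by intro l hl; interval_cases l; exact hF
    rw [Finset.sum_eq_single (s, 1)]
    · rw [ih]; ring
    · rintro ⟨u, w⟩ huw hne
      simp only [Finset.HasAntidiagonal.mem_antidiagonal] at huw
      rcases lt_or_ge u (s * 1) with h | h
      · rw [coeff_pow_lt h1 s u h, zero_mul]
      · rw [mul_one] at h
        have hw : w ≤ 1 := by omega
        interval_cases w
        · rw [hF, mul_zero]
        · exact absurd (by omega : u = s) (fun h => hne (by simp [h]))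
    · intro h; simp at h

lemma supp_mul {F G : PowerSeries k} {m p q : ℕ}
    (hF : ∀ a, coeff a F ≠ 0 → a ≡ p [MOD m])
    (hG : ∀ a, coeff a G ≠ 0 → a ≡ q [MOD m]) :
    ∀ a, coeff a (F * G) ≠ 0 → a ≡ p + q [MOD m] := by
  intro a ha
  rw [coeff_mul] at ha
  obtain ⟨⟨u, v⟩, huv, hne⟩ := Finset.exists_ne_zero_of_sum_ne_zero ha
  simp only [Finset.HasAntidiagonal.mem_antidiagonal] at huv
  have h1 := hF u (fun h => hne (by rw [h, zero_mul]))
  have h2 := hG v (fun h => hne (by rw [h, mul_zero]))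
  subst huv
  exact Nat.ModEq.add h1 h2

lemma supp_pow {F : PowerSeries k} {m : ℕ}
    (hF : ∀ a, coeff a F ≠ 0 → a ≡ 1 [MOD m]) (i : ℕ) :
    ∀ a, coeff a (F ^ i) ≠ 0 → a ≡ i [MOD m] := by
  induction i with
  | zero =>
    intro a ha
    rw [pow_zero] at ha
    have : a = 0 := by
      by_contra h
      exact ha (by simp [coeff_one, h])
    subst this; rfl
  | succ i ih =>
    intro a ha
    rw [pow_succ] at ha
    exact supp_mul ih hF a ha



lemma keyPow {T E : PowerSeries k} {n i j : ℕ} (hn : 2 ≤ n) (hj : 2 ≤ j) (hi : n ≤ i)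
    (hT0 : coeff 0 T = 0) (hE : ∀ l, l < j → coeff l E = 0) :
    coeff (n - 1 + j) ((T + E) ^ i) =
      coeff (n - 1 + j) (T ^ i) +
        (if i = n then (n : k) * (coeff 1 T) ^ (n - 1) * coeff j E else 0) := by
  have hT1 : ∀ l, l < 1 → coeff l T = 0 := by intro l hl; interval_cases l; exact hT0
  set N := n - 1 + j with hN
  rw [add_pow, map_sum]
  have hsub : ({i - 1, i} : Finset ℕ) ⊆ Finset.range (i + 1) := by
    intro x hx; simp at hx; simp; omega
  rw [← Finset.sum_subset hsub ?_]
  · rw [Finset.sum_pair (by omega : i - 1 ≠ i)]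
    have hlast : coeff N (T ^ i * E ^ (i - i) * ((Nat.choose i i : ℕ) : k⟦X⟧)) =
        coeff N (T ^ i) := by
      simp
    have hmid : coeff N (T ^ (i-1) * E ^ (i - (i-1)) * ((Nat.choose i (i-1) : ℕ) : k⟦X⟧)) =
        (if i = n then (n : k) * (coeff 1 T) ^ (n - 1) * coeff j E else 0) := by
      have h1 : i - (i - 1) = 1 := by omega
      have h2 : Nat.choose i (i-1) = i :=
        (Nat.choose_symm (by omega)).symm.trans (by rw [show i - (i-1) = 1 from h1,
          Nat.choose_one_right])
      rw [h1, pow_one, h2, ← map_natCast (PowerSeries.C (R := k)) i, coeff_mul_C]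
      by_cases hin : i = n
      · subst hin
        rw [if_pos rfl]
        have : coeff N (T ^ (i - 1) * E) = (coeff 1 T) ^ (i - 1) * coeff j E := by
          rw [coeff_mul, Finset.sum_eq_single (i - 1, j)]
          · rw [coeff_pow_self hT0]
          · rintro ⟨u, v⟩ huv hne
            simp only [Finset.HasAntidiagonal.mem_antidiagonal] at huv
            rcases lt_or_ge u (i - 1) with h | h
            · rw [coeff_pow_lt hT1 (i-1) u (by omega), zero_mul]
            · rcases lt_or_ge v j with h' | h'
              · rw [hE v h', mul_zero]
              · exact absurd (by omega : u = i - 1 ∧ v = j)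
                  (fun hc => hne (by simp [hc.1, hc.2]))
          · intro hmem
            exact absurd (by simp [Finset.mem_antidiagonal] <;> omega) hmem
        rw [this]; ring
      · rw [if_neg hin]
        have : coeff N (T ^ (i - 1) * E) = 0 := by
          rw [coeff_mul]
          apply Finset.sum_eq_zero
          rintro ⟨u, v⟩ huv
          simp only [Finset.HasAntidiagonal.mem_antidiagonal] at huv
          rcases lt_or_ge u (i - 1) with h | h
          · rw [coeff_pow_lt hT1 (i-1) u (by omega), zero_mul]
          · rw [hE v (by omega), mul_zero]
        rw [this, zero_mul]
    rw [hlast, hmid, add_comm]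
  · intro s hs hns
    simp only [Finset.mem_range] at hs
    simp only [Finset.mem_insert, Finset.mem_singleton] at hns
    push_neg at hns
    have ht2 : 2 ≤ i - s := by omega
    rw [← map_natCast (PowerSeries.C (R := k)) (Nat.choose i s), coeff_mul_C]
    have : coeff N (T ^ s * E ^ (i - s)) = 0 := by
      rw [coeff_mul]
      apply Finset.sum_eq_zero
      rintro ⟨u, v⟩ huv
      simp only [Finset.HasAntidiagonal.mem_antidiagonal] at huv
      rcases lt_or_ge u s with h | h
      · rw [coeff_pow_lt hT1 s u (by omega), zero_mul]
      · rcases lt_or_ge v ((i - s) * j) with h' | h'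
        · rw [coeff_pow_lt hE (i - s) v h', mul_zero]
        · exfalso
          have hb2 : (i - s) + j ≤ (i - s) * j := Nat.add_le_mul ht2 hj
          omega
    rw [this, zero_mul]

lemma coeff_comp (A B : PowerSeries k) (N : ℕ) :
    coeff N (comp A B) =
      ∑ i ∈ Finset.range (N + 1), coeff i A * coeff N (B ^ i) :=
  coeff_mk _ _

lemma coeff_comp_Xpow (R : PowerSeries k) {m : ℕ} (hm : 1 ≤ m) (b : ℕ) :
    coeff b (comp R (X ^ m)) = if m ∣ b then coeff (b / m) R else 0 := by
  rw [coeff_comp]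
  by_cases hd : m ∣ b
  · rw [if_pos hd]
    rw [Finset.sum_eq_single (b / m)]
    · rw [← pow_mul, coeff_X_pow, if_pos (by rw [Nat.mul_comm]; exact (Nat.div_mul_cancel hd).symm),
        mul_one]
    · intro i _ hne
      rw [← pow_mul, coeff_X_pow, if_neg, mul_zero]
      intro hbm
      exact hne (by subst hbm; rw [Nat.mul_div_cancel_left i (by omega)])
    · intro hmem
      exact absurd (Finset.mem_range.mpr (by
        have := Nat.div_le_self b m; omega)) hmem
  · rw [if_neg hd]
    apply Finset.sum_eq_zero
    intro i _
    rw [← pow_mul, coeff_X_pow, if_neg (fun h => hd ⟨i, h⟩), mul_zero]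

lemma supp_beta [CharZero k] {A β : PowerSeries k} {n m : ℕ} (hn : 2 ≤ n) (hm : 2 ≤ m)
    (hAlow : ∀ i, i < n → coeff i A = 0) (hAn : coeff n A ≠ 0)
    (hAsupp : ∀ a, coeff a A ≠ 0 → a ≡ n [MOD m])
    (hb0 : coeff 0 β = 0) (hb1 : coeff 1 β ≠ 0)
    (heq : comp A β = comp β (X ^ n)) :
    ∀ j, ¬ (j ≡ 1 [MOD m]) → coeff j β = 0 := by
  intro j
  induction j using Nat.strong_induction_on with
  | _ j IH =>
  intro hj1
  rcases Nat.lt_or_ge j 2 with hj2 | hj2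
  · interval_cases j
    · exact hb0
    · exact absurd rfl hj1
  set N := n - 1 + j with hN
  have hkey := congrArg (coeff N) heq
  rw [coeff_comp, coeff_comp_Xpow β (by omega) N] at hkey
  -- RHS is zero
  have hRHS : (if n ∣ N then coeff (N / n) β else 0) = 0 := by
    split_ifs with hd
    · by_contra hcon
      have hlt : N / n < j := by
        have h2 : 2 * (j-1) ≤ n * (j-1) := Nat.mul_le_mul_right _ hn
        have h3 : n * j = n * (j - 1) + n := by
          have hj' : j = (j - 1) + 1 := by omega
          rw [hj', Nat.mul_succ, Nat.add_sub_cancel]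
        exact Nat.div_lt_of_lt_mul (by omega)
      have hmod := IH (N / n) hlt
      have hmod2 : N / n ≡ 1 [MOD m] := by
        by_contra hc; exact hcon (hmod hc)
      have : N ≡ n [MOD m] := by
        have := Nat.ModEq.mul_left n hmod2
        rw [Nat.mul_div_cancel' hd, Nat.mul_one] at this
        exact this
      have : j ≡ 1 [MOD m] := by
        have h' : (n-1) + j ≡ (n-1) + 1 [MOD m] := by
          rw [show n - 1 + 1 = n by omega]; exact this
        exact Nat.ModEq.add_left_cancel' _ h'
      exact hj1 this
    · rfl
  rw [hRHS] at hkey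
  -- set up truncation
  set T : PowerSeries k := PowerSeries.mk fun l => if l < j then coeff l β else 0 with hT
  set E : PowerSeries k := β - T with hE
  have hTE : T + E = β := by ring
  have hTc : ∀ l, coeff l T = if l < j then coeff l β else 0 := fun l => coeff_mk _ _
  have hEc : ∀ l, l < j → coeff l E = 0 := by
    intro l hl; rw [hE, map_sub, hTc, if_pos hl, sub_self]
  have hEj : coeff j E = coeff j β := by
    rw [hE, map_sub, hTc, if_neg (by omega), sub_zero]
  have hT0 : coeff 0 T = 0 := by rw [hTc, if_pos (by omega)]; exact hb0
  have hT1 : coeff 1 T = coeff 1 β := by rw [hTc, if_pos (by omega)]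
  have hTsupp : ∀ a, coeff a T ≠ 0 → a ≡ 1 [MOD m] := by
    intro a ha
    rw [hTc] at ha
    by_cases hal : a < j
    · rw [if_pos hal] at ha
      by_contra hc
      exact ha (IH a hal hc)
    · rw [if_neg hal] at ha; exact absurd rfl ha
  -- per-term analysis
  have hterm : ∀ i ∈ Finset.range (N + 1),
      coeff i A * coeff N (β ^ i) =
        if i = n then coeff n A * ((n : k) * (coeff 1 β) ^ (n - 1) * coeff j β) else 0 := by
    intro i _
    rcases Nat.lt_or_ge i n with hilt | hige
    · rw [hAlow i hilt, zero_mul, if_neg (by omega)]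
    · have hk := keyPow (T := T) (E := E) hn hj2 hige hT0 hEc
      rw [hTE] at hk
      have hTzero : coeff i A * coeff N (T ^ i) = 0 := by
        by_cases hai : coeff i A = 0
        · rw [hai, zero_mul]
        · have hin : i ≡ n [MOD m] := hAsupp i hai
          have : coeff N (T ^ i) = 0 := by
            by_contra hc
            have hNi : N ≡ i [MOD m] := supp_pow hTsupp i N hc
            have hNn : N ≡ n [MOD m] := hNi.trans hin
            have : j ≡ 1 [MOD m] := by
              have h' : (n-1) + j ≡ (n-1) + 1 [MOD m] := by
                rw [show n - 1 + 1 = n by omega]; exact hNn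
              exact Nat.ModEq.add_left_cancel' _ h'
            exact hj1 this
          rw [this, mul_zero]
      rw [hk, mul_add, hTzero, zero_add, hT1, hEj]
      split_ifs with hin
      · subst hin; rfl
      · rw [mul_zero]
  rw [Finset.sum_congr rfl hterm, Finset.sum_ite_eq' (Finset.range (N+1)) n] at hkey
  rw [if_pos (Finset.mem_range.mpr (by omega))] at hkey
  have hnne : (n : k) ≠ 0 := Nat.cast_ne_zero.mpr (by omega)
  have hb1n : (coeff 1 β) ^ (n - 1) ≠ 0 := pow_ne_zero _ hb1
  by_contra hc
  exact (mul_ne_zero hAn (mul_ne_zero (mul_ne_zero hnne hb1n) hc)) hkey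

lemma supp_A {A β : PowerSeries k} {n m : ℕ} (hn : 2 ≤ n) (hm : 2 ≤ m)
    (hb0 : coeff 0 β = 0) (hb1 : coeff 1 β ≠ 0)
    (hbsupp : ∀ a, coeff a β ≠ 0 → a ≡ 1 [MOD m])
    (heq : comp A β = comp β (X ^ n)) :
    ∀ j, ¬ (j ≡ n [MOD m]) → coeff j A = 0 := by
  intro j
  induction j using Nat.strong_induction_on with
  | _ j IH =>
  intro hjn
  have hkey := congrArg (coeff j) heq
  rw [coeff_comp, coeff_comp_Xpow β (by omega) j] at hkey
  have hRHS : (if n ∣ j then coeff (j / n) β else 0) = 0 := by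
    split_ifs with hd
    · by_contra hc
      have h1 : j / n ≡ 1 [MOD m] := hbsupp _ hc
      have : j ≡ n [MOD m] := by
        have := Nat.ModEq.mul_left n h1
        rw [Nat.mul_div_cancel' hd, Nat.mul_one] at this
        exact this
      exact hjn this
    · rfl
  rw [hRHS] at hkey
  have hterm : ∀ i ∈ Finset.range (j + 1),
      coeff i A * coeff j (β ^ i) =
        if i = j then coeff j A * (coeff 1 β) ^ j else 0 := by
    intro i hi
    simp only [Finset.mem_range] at hi
    by_cases hij : i = j
    · subst hij; rw [if_pos rfl, coeff_pow_self hb0]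
    · rw [if_neg hij]
      have hilt : i < j := by omega
      by_cases hai : coeff i A = 0
      · rw [hai, zero_mul]
      · have hin : i ≡ n [MOD m] := by
          by_contra hc; exact hai (IH i hilt hc)
        have : coeff j (β ^ i) = 0 := by
          by_contra hc
          exact hjn ((supp_pow hbsupp i j hc).trans hin)
        rw [this, mul_zero]
  rw [Finset.sum_congr rfl hterm, Finset.sum_ite_eq' (Finset.range (j+1)) j] at hkey
  rw [if_pos (Finset.mem_range.mpr (by omega))] at hkey
  by_contra hc
  exact (mul_ne_zero hc (pow_ne_zero _ hb1)) hkey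

lemma form_beta {β : PowerSeries k} {m : ℕ} (hm : 2 ≤ m)
    (hb1 : coeff 1 β ≠ 0)
    (hsupp : ∀ a, ¬ (a ≡ 1 [MOD m]) → coeff a β = 0) :
    ∃ L : PowerSeries k, constantCoeff L ≠ 0 ∧ β = X * comp L (X ^ m) := by
  refine ⟨PowerSeries.mk fun q => coeff (1 + m * q) β, ?_, ?_⟩
  · rw [← coeff_zero_eq_constantCoeff, coeff_mk]
    simpa using hb1
  · ext a
    cases a with
    | zero =>
      rw [coeff_mul]
      rw [Finset.sum_eq_zero, hsupp 0 (by
        intro h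
        have h2 := (Nat.modEq_zero_iff_dvd).mp h.symm
        have := Nat.le_of_dvd one_pos h2
        omega)]
      rintro ⟨u, v⟩ huv
      simp only [Finset.HasAntidiagonal.mem_antidiagonal] at huv
      have : u = 0 := by omega
      subst this
      simp
    | succ a' =>
      rw [coeff_succ_X_mul, coeff_comp_Xpow _ (by omega)]
      split_ifs with hd
      · rw [coeff_mk, Nat.mul_div_cancel' hd]
        rw [Nat.add_comm]
      · rw [hsupp (a' + 1)]
        intro h
        have : m ∣ (a' + 1) - 1 := (Nat.modEq_iff_dvd' (by omega)).mp h.symm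
        simp at this
        exact hd this

lemma coeff_Xpow_mul' (F : PowerSeries k) (r d : ℕ) :
    coeff d (X ^ r * F) = if r ≤ d then coeff (d - r) F else 0 :=
  coeff_X_pow_mul' F r d

lemma form_A {A : PowerSeries k} {n m : ℕ} (hn : 2 ≤ n) (hm : 2 ≤ m)
    (hAlow : ∀ i, i < n → coeff i A = 0)
    (hsupp : ∀ a, ¬ (a ≡ n [MOD m]) → coeff a A = 0) :
    ∃ (R : PowerSeries k) (r : ℕ), A = X ^ r * comp R (X ^ m) := by
  refine ⟨PowerSeries.mk fun q => coeff (n % m + m * q) A, n % m, ?_⟩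
  ext a
  rw [coeff_Xpow_mul']
  split_ifs with hra
  · rw [coeff_comp_Xpow _ (by omega)]
    split_ifs with hd
    · rw [coeff_mk, Nat.mul_div_cancel' hd, Nat.add_sub_cancel' hra]
    · rw [hsupp a]
      intro h
      have h1 : n % m ≡ n [MOD m] := Nat.mod_modEq n m
      have h2 : n % m ≡ a [MOD m] := h1.trans h.symm
      exact hd ((Nat.modEq_iff_dvd' hra).mp h2)
  · rw [hAlow a (by have := Nat.mod_le n m; omega)]

noncomputable def bo (A : PowerSeries k) (n : ℕ) (c : k) : ℕ → k
  | 0 => 0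
  | 1 => c
  | j + 2 =>
    (n : k)⁻¹ *
      ((if h : 2 ≤ n ∧ n ∣ (n + 1 + j) then bo A n c ((n + 1 + j) / n) else 0) -
        ∑ i ∈ Finset.range (n + 2 + j), coeff i A *
          coeff (n + 1 + j)
            ((PowerSeries.mk fun l => if h : l < j + 2 then bo A n c l else 0) ^ i))
  decreasing_by
  · have h2 : 2 * j ≤ n * j := Nat.mul_le_mul_right _ h.1
    have h3 : n * (j + 1 + 1) = n * j + 2 * n := by ring
    exact Nat.div_lt_of_lt_mul (by simp only [Nat.succ_eq_add_one]; omega)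
  · exact h

lemma exists_bottcher [IsAlgClosed k] [CharZero k] {A : PowerSeries k} {n : ℕ} (hn : 2 ≤ n)
    (hAn : coeff n A ≠ 0) (hAlow : ∀ i, i < n → coeff i A = 0) :
    ∃ β : PowerSeries k, coeff 0 β = 0 ∧ coeff 1 β ≠ 0 ∧ comp A β = comp β (X ^ n) := by
  obtain ⟨c, hc⟩ := IsAlgClosed.exists_pow_nat_eq (coeff n A)⁻¹ (n := n - 1) (by omega)
  have hcne : c ≠ 0 := by
    intro h; rw [h, zero_pow (by omega)] at hc; exact (inv_ne_zero hAn) hc.symm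
  have hac : coeff n A * c ^ (n - 1) = 1 := by
    rw [hc]; field_simp
  have hnne : (n : k) ≠ 0 := Nat.cast_ne_zero.mpr (by omega)
  set b : ℕ → k := bo A n c with hb
  set β := PowerSeries.mk b with hβ
  have hcoeff : ∀ l, coeff l β = b l := fun l => coeff_mk _ _
  have hb0 : b 0 = 0 := by rw [hb]; simp [bo]
  have hb1 : b 1 = c := by rw [hb]; simp [bo]
  have hbrec : ∀ j : ℕ, b (j + 2) =
      (n : k)⁻¹ * ((if n ∣ (n + 1 + j) then b ((n + 1 + j) / n) else 0) -
        ∑ i ∈ Finset.range (n + 2 + j), coeff i A *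
          coeff (n + 1 + j) ((PowerSeries.mk fun l => if l < j + 2 then b l else 0) ^ i)) := by
    intro j
    conv_lhs => rw [hb, bo]
    simp only [dite_eq_ite, hn, true_and]
    rfl
  refine ⟨β, by rw [hcoeff 0]; exact hb0, by rw [hcoeff 1, hb1]; exact hcne, ?_⟩
  ext N
  rw [coeff_comp, coeff_comp_Xpow β (by omega) N]
  rcases lt_trichotomy N n with hNn | hNn | hNn
  · rw [Finset.sum_eq_zero (fun i hi => by
      simp only [Finset.mem_range] at hi
      rw [hAlow i (by omega), zero_mul])]
    split_ifs with hd
    · have hN0 : N = 0 := by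
        rcases Nat.eq_zero_or_pos N with h | h
        · exact h
        · exact absurd (Nat.le_of_dvd h hd) (by omega)
      subst hN0
      rw [Nat.zero_div, hcoeff 0, hb0]
    · rfl
  · rw [hNn]
    rw [Finset.sum_eq_single n]
    · have hps : coeff n (β ^ n) = (coeff 1 β) ^ n :=
        coeff_pow_self (by rw [hcoeff 0]; exact hb0) n
      rw [hps, hcoeff 1, hb1, if_pos (dvd_refl n), Nat.div_self (by omega), hcoeff 1, hb1]
      have hcn : c ^ n = c ^ (n - 1) * c := by
        rw [← pow_succ]; congr 1; omega
      rw [hcn, ← mul_assoc, hac, one_mul]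
    · intro i hi hne
      simp only [Finset.mem_range] at hi
      rw [hAlow i (by omega), zero_mul]
    · intro hmem
      exact absurd (Finset.mem_range.mpr (by omega)) hmem
  · obtain ⟨jj, rfl⟩ : ∃ jj, N = n + 1 + jj := ⟨N - n - 1, by omega⟩
    set T : PowerSeries k := PowerSeries.mk fun l => if l < jj + 2 then b l else 0 with hT
    set E : PowerSeries k := β - T with hE
    have hTE : T + E = β := by ring
    have hTc : ∀ l, coeff l T = if l < jj + 2 then b l else 0 := fun l => coeff_mk _ _
    have hEc : ∀ l, l < jj + 2 → coeff l E = 0 := by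
      intro l hl; rw [hE, map_sub, hTc, if_pos hl, hcoeff, sub_self]
    have hEj : coeff (jj + 2) E = b (jj + 2) := by
      rw [hE, map_sub, hTc, if_neg (by omega), hcoeff, sub_zero]
    have hT0 : coeff 0 T = 0 := by rw [hTc, if_pos (by omega)]; exact hb0
    have hT1 : coeff 1 T = c := by rw [hTc, if_pos (by omega)]; exact hb1
    have hidx : n - 1 + (jj + 2) = n + 1 + jj := by omega
    have hterm : ∀ i ∈ Finset.range (n + 1 + jj + 1),
        coeff i A * coeff (n + 1 + jj) (β ^ i) =
          coeff i A * coeff (n + 1 + jj) (T ^ i) +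
            (if i = n then coeff n A * ((n : k) * c ^ (n - 1) * b (jj + 2)) else 0) := by
      intro i _
      rcases Nat.lt_or_ge i n with hilt | hige
      · rw [hAlow i hilt, zero_mul, zero_mul, if_neg (by omega), zero_add]
      · have hk := keyPow (T := T) (E := E) hn (by omega) hige hT0 hEc
        rw [hTE, hidx, hT1, hEj] at hk
        rw [hk, mul_add]
        congr 1
        split_ifs with hin
        · subst hin; rfl
        · rw [mul_zero]
    rw [Finset.sum_congr rfl hterm, Finset.sum_add_distrib,
      Finset.sum_ite_eq' (Finset.range (n + 1 + jj + 1)) n,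
      if_pos (Finset.mem_range.mpr (by omega))]
    have hform : coeff n A * ((n : k) * c ^ (n - 1) * b (jj + 2)) = (n : k) * b (jj + 2) := by
      linear_combination ((n : k) * b (jj + 2)) * hac
    rw [hform, hbrec jj, mul_inv_cancel_left₀ hnne, ← hT]
    simp only [hcoeff]
    have hrange : n + 2 + jj = n + 1 + jj + 1 := by omega
    rw [hrange]
    ring

end Aux

theorem stmt16 {k : Type*} [Field k] [IsAlgClosed k] [CharZero k]
    {n m : ℕ} (hn : 2 ≤ n) (hm : 2 ≤ m)
    (A : PowerSeries k) (hA : A.order = (n : ℕ∞)) :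
    (∃ (R : PowerSeries k) (r : ℕ), A = X ^ r * comp R (X ^ m)) ↔
      ∀ β : PowerSeries k, β.order = 1 → comp A β = comp β (X ^ n) →
        ∃ L : PowerSeries k, constantCoeff L ≠ 0 ∧ β = X * comp L (X ^ m) := by
  have hA' : coeff n A ≠ 0 ∧ ∀ i, i < n → coeff i A = 0 := by
    rw [PowerSeries.order_eq_nat] at hA; exact hA
  obtain ⟨hAn, hAlow⟩ := hA'
  constructor
  · rintro ⟨R, r, hAR⟩ β hβord hβeq
    rw [show (1 : ℕ∞) = ((1 : ℕ) : ℕ∞) by norm_cast, PowerSeries.order_eq_nat] at hβord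
    obtain ⟨hb1, hblow⟩ := hβord
    have hb0 : coeff 0 β = 0 := hblow 0 (by omega)
    have hAsupp : ∀ a, coeff a A ≠ 0 → a ≡ n [MOD m] := by
      have hgen : ∀ a, coeff a A ≠ 0 → (r ≤ a ∧ a ≡ r [MOD m]) := by
        intro a ha
        rw [hAR, coeff_Xpow_mul'] at ha
        split_ifs at ha with h1
        · rw [coeff_comp_Xpow _ (by omega)] at ha
          split_ifs at ha with h2
          · exact ⟨h1, ((Nat.modEq_iff_dvd' h1).mpr h2).symm⟩
          · exact absurd rfl ha
        · exact absurd rfl ha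
      intro a ha
      exact (hgen a ha).2.trans (hgen n hAn).2.symm
    have hsupp := supp_beta hn hm hAlow hAn hAsupp hb0 hb1 hβeq
    exact form_beta hm hb1 hsupp
  · intro H
    obtain ⟨β, hb0, hb1, hβeq⟩ := exists_bottcher hn hAn hAlow
    have hβord : β.order = 1 := by
      rw [show (1 : ℕ∞) = ((1 : ℕ) : ℕ∞) by norm_cast, PowerSeries.order_eq_nat]
      exact ⟨hb1, fun i hi => by interval_cases i; exact hb0⟩
    obtain ⟨L, hL0, hLform⟩ := H β hβord hβeq
    have hbsupp : ∀ a, coeff a β ≠ 0 → a ≡ 1 [MOD m] := by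
      intro a ha
      rw [hLform] at ha
      cases a with
      | zero =>
        exfalso; apply ha
        rw [coeff_mul]; apply Finset.sum_eq_zero; rintro ⟨u, v⟩ huv
        simp only [Finset.HasAntidiagonal.mem_antidiagonal] at huv
        have hu : u = 0 := by omega
        subst hu; simp
      | succ a' =>
        rw [coeff_succ_X_mul, coeff_comp_Xpow _ (by omega)] at ha
        split_ifs at ha with hd
        · exact ((Nat.modEq_iff_dvd' (by omega)).mpr (by simpa using hd)).symm
        · exact absurd rfl ha
    have hAsupp := supp_A hn hm hb0 hb1 hbsupp hβeq
    exact form_A hn hm hAlow hAsupp
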